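/- Let F(x)=1-x^{-β} for x≥1, 0<α<β, m=β/(β-α), and R(x)=2/(1-G_F(x))-(1-F(x))/(1-G_F(x))^2 with 1-G_F(x)=mx^{-α}+(1-m)x^{-β}. Then x^{β-2α}(R(x)-2x^α/m) → (2m-3)/m^2 as x→∞. -/

import Mathlib

open MeasureTheory Filter Topology Real Set

theorem stmt12 (α β : ℝ) (hα : 0 < α) (hβ : α < β)
    (m : ℝ) (hm : m = β / (β - α))
    (R : ℝ → ℝ)
    (hR : ∀ x ≥ 1,
      R x = 2 / (m * x ^ (-α) + (1 - m) * x ^ (-β))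
            - x ^ (-β) / (m * x ^ (-α) + (1 - m) * x ^ (-β)) ^ 2) :
    Tendsto (fun x => x ^ (β - 2 * α) * (R x - 2 * x ^ α / m)) atTop
      (𝓝 ((2 * m - 3) / m ^ 2)) := by
  have hβα : 0 < β - α := sub_pos.2 hβ
  have hm1 : 1 < m := by rw [hm, lt_div_iff₀ hβα]; linarith
  have hm0 : (0:ℝ) < m := by linarith
  set c : ℝ := (1 - m) / m with hc
  have hmc : m * c = 1 - m := by rw [hc]; field_simp
  have hu : Tendsto (fun x : ℝ => x ^ (-(β - α))) atTop (𝓝 0) :=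
    tendsto_rpow_neg_atTop hβα
  have hw : Tendsto (fun x : ℝ => 1 + c * x ^ (-(β - α))) atTop (𝓝 1) := by
    have h2 := tendsto_const_nhds (x := (1:ℝ)) (f := atTop) |>.add (hu.const_mul c)
    simpa using h2
  have hf : Tendsto (fun x : ℝ => 2 / m * (-c / (1 + c * x ^ (-(β - α))))
      - 1 / (m ^ 2 * (1 + c * x ^ (-(β - α))) ^ 2)) atTop (𝓝 ((2 * m - 3) / m ^ 2)) := by
    have h1 : Tendsto (fun x : ℝ => 2 / m * (-c / (1 + c * x ^ (-(β - α))))) atTop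
        (𝓝 (2 / m * (-c / 1))) :=
      (tendsto_const_nhds.div hw one_ne_zero).const_mul _
    have h2 : Tendsto (fun x : ℝ => 1 / (m ^ 2 * (1 + c * x ^ (-(β - α))) ^ 2)) atTop
        (𝓝 (1 / (m ^ 2 * 1 ^ 2))) := by
      apply tendsto_const_nhds.div (tendsto_const_nhds.mul (hw.pow 2))
      positivity
    have h3 := h1.sub h2
    have hv : (2 * m - 3) / m ^ 2 = 2 / m * (-c / 1) - 1 / (m ^ 2 * 1 ^ 2) := by
      field_simp [hc]; linear_combination 2 * hmc
    rw [hv]; exact h3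
  have heq : ∀ᶠ x in atTop,
      2 / m * (-c / (1 + c * x ^ (-(β - α)))) - 1 / (m ^ 2 * (1 + c * x ^ (-(β - α))) ^ 2)
        = x ^ (β - 2 * α) * (R x - 2 * x ^ α / m) := by
    filter_upwards [eventually_ge_atTop (1:ℝ),
      hw.eventually (eventually_gt_nhds (by norm_num : (1:ℝ)/2 < 1))] with x hx1 hwx
    have hx0 : (0:ℝ) < x := lt_of_lt_of_le one_pos hx1
    set p := x ^ (-α) with hp
    set q := x ^ (-(β - α)) with hq
    have hp0 : 0 < p := rpow_pos_of_pos hx0 _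
    have hq0 : 0 < q := rpow_pos_of_pos hx0 _
    have hw0 : (0:ℝ) < 1 + c * q := by linarith
    have hpq : x ^ (-β) = p * q := by
      rw [hp, hq, ← rpow_add hx0]; ring_nf
    have hβ2 : x ^ (β - 2 * α) = p / q := by
      rw [hp, hq, ← rpow_sub hx0]; ring_nf
    have hxα : x ^ α = 1 / p := by
      rw [hp, one_div, ← rpow_neg hx0.le, neg_neg]
    rw [hR x hx1, hpq, hβ2, hxα]
    have hD : m * p + (1 - m) * (p * q) = m * p * (1 + c * q) := by
      have h : m * p * (1 + c * q) = m * p + (m * c) * (p * q) := by ring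
      rw [h, hmc]
    rw [hD]
    field_simp
    ring
  exact hf.congr' heq
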